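/- Let x_1,...,x_n be distinct real numbers and define the Vandermonde-type matrix M with (i,j) entry (-1)^{j-1} x_i^{n-j}/ω'(x_i), where ω(x) = ∏_{i=1}^n (x - x_i). Then M is invertible and its inverse is the matrix of partial derivatives of elementary symmetric polynomials, [∂c_i/∂x_j]_{i,j=1}^n. -/

import Mathlib

open Polynomial Finset

private lemma pderiv_prod_X {n : ℕ} (j : Fin n) (t : Finset (Fin n)) :
    MvPolynomial.pderiv j (∏ i ∈ t, MvPolynomial.X i : MvPolynomial (Fin n) ℝ)
      = if j ∈ t then ∏ i ∈ t.erase j, MvPolynomial.X i else 0 := by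
  induction t using Finset.induction with
  | empty => simp
  | @insert a t ha ih =>
    rw [Finset.prod_insert ha, Derivation.leibniz, ih, MvPolynomial.pderiv_X]
    by_cases hj : j = a
    · subst hj
      simp [ha, Finset.erase_insert ha]
    · by_cases ht : j ∈ t
      · have : a ∈ (insert a t).erase j := by
          simp [Finset.mem_erase, Ne.symm hj]
        rw [if_pos ht, if_pos (Finset.mem_insert_of_mem ht),
          Finset.erase_insert_of_ne (Ne.symm hj), Finset.prod_insert (by simp [ha]),
          Pi.single_eq_of_ne (Ne.symm hj)]
        simp [smul_eq_mul]
      · rw [if_neg ht, Pi.single_eq_of_ne (Ne.symm hj), if_neg (by simp [hj, ht])]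
        simp

private lemma eval_pderiv_esymm {n : ℕ} (x : Fin n → ℝ) (k : Fin n) (m : ℕ) :
    MvPolynomial.eval x (MvPolynomial.pderiv k (MvPolynomial.esymm (Fin n) ℝ (m + 1)))
      = ∑ t ∈ (Finset.univ.erase k).powersetCard m, ∏ i ∈ t, x i := by
  rw [MvPolynomial.esymm, map_sum]
  simp_rw [pderiv_prod_X]
  rw [map_sum]
  have : ∀ t ∈ Finset.powersetCard (m + 1) (Finset.univ : Finset (Fin n)),
      MvPolynomial.eval x (if k ∈ t then ∏ i ∈ t.erase k, MvPolynomial.X i else 0)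
        = if k ∈ t then ∏ i ∈ t.erase k, x i else 0 := by
    intro t _
    split <;> simp [MvPolynomial.eval_prod]
  rw [Finset.sum_congr rfl this, Finset.sum_ite, Finset.sum_const_zero, add_zero]
  refine Finset.sum_nbij' (fun t => t.erase k) (fun s => insert k s) ?_ ?_ ?_ ?_ ?_
  · intro t ht
    simp only [Finset.mem_filter, Finset.mem_powersetCard] at ht
    rw [Finset.mem_powersetCard]
    refine ⟨Finset.erase_subset_erase _ ht.1.1, ?_⟩
    rw [Finset.card_erase_of_mem ht.2, ht.1.2]
    simp
  · intro s hs
    rw [Finset.mem_powersetCard] at hs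
    have hks : k ∉ s := fun h => (Finset.mem_erase.mp (hs.1 h)).1 rfl
    simp only [Finset.mem_filter, Finset.mem_powersetCard]
    exact ⟨⟨Finset.subset_univ _, by rw [Finset.card_insert_of_notMem hks, hs.2]⟩,
      Finset.mem_insert_self _ _⟩
  · intro t ht
    simp only [Finset.mem_filter] at ht
    exact Finset.insert_erase ht.2
  · intro s hs
    rw [Finset.mem_powersetCard] at hs
    have hks : k ∉ s := fun h => (Finset.mem_erase.mp (hs.1 h)).1 rfl
    exact Finset.erase_insert hks
  · intro t _
    rfl

theorem inv_of_vandermonde_type_matrix (n : ℕ) (x : Fin n → ℝ)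
    (hx : Function.Injective x) :
    let ω : Polynomial ℝ := ∏ i : Fin n, (X - C (x i))
    let M : Matrix (Fin n) (Fin n) ℝ := fun i j =>
      (-1 : ℝ) ^ (j.val) * x i ^ (n - 1 - j.val) / (derivative ω).eval (x i)
    let J : Matrix (Fin n) (Fin n) ℝ := fun i j =>
      MvPolynomial.eval x (MvPolynomial.pderiv j (MvPolynomial.esymm (Fin n) ℝ (i.val + 1)))
    IsUnit M ∧ M⁻¹ = J := by
  intro ω M J
  -- the derivative of ω evaluated at a node
  have hω : ∀ i : Fin n, (derivative ω).eval (x i)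
      = ∏ ℓ ∈ Finset.univ.erase i, (x i - x ℓ) := by
    intro i
    have : ω = Lagrange.nodal Finset.univ x := rfl
    rw [this, Lagrange.eval_nodal_derivative_eval_node_eq (Finset.mem_univ i),
      Lagrange.eval_nodal]
  have hD : ∀ i : Fin n, (∏ ℓ ∈ Finset.univ.erase i, (x i - x ℓ)) ≠ 0 := by
    intro i
    rw [Finset.prod_ne_zero_iff]
    intro ℓ hℓ
    rw [Finset.mem_erase] at hℓ
    exact sub_ne_zero.mpr fun h => hℓ.1 (hx h).symm
  -- Vieta evaluated identity
  have key : ∀ i k : Fin n,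
      (∑ j ∈ Finset.range n, (-1 : ℝ) ^ j * x i ^ (n - 1 - j) *
        ∑ t ∈ (Finset.univ.erase k).powersetCard j, ∏ l ∈ t, x l)
        = ∏ ℓ ∈ Finset.univ.erase k, (x i - x ℓ) := by
    intro i k
    have hcard : (Finset.univ.erase k).card = n - 1 := by
      rw [Finset.card_erase_of_mem (Finset.mem_univ k), Finset.card_univ, Fintype.card_fin]
    have hn : 1 ≤ n := Nat.one_le_iff_ne_zero.mpr (by rintro rfl; exact k.elim0)
    have hvieta := Multiset.prod_X_sub_X_eq_sum_esymm
      ((Finset.univ.erase k).val.map x)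
    have hcard' : Multiset.card ((Finset.univ.erase k).val.map x) = n - 1 := by
      rw [Multiset.card_map]; exact hcard
    rw [hcard'] at hvieta
    have := congrArg (Polynomial.eval (x i)) hvieta
    rw [Multiset.map_map] at this
    have hlhs : Polynomial.eval (x i)
        ((Multiset.map ((fun t => X - C t) ∘ x) (Finset.univ.erase k).val)).prod
        = ∏ ℓ ∈ Finset.univ.erase k, (x i - x ℓ) := by
      rw [← Finset.prod_eq_multiset_prod, Polynomial.eval_prod]
      simp
    rw [hlhs] at this
    rw [Polynomial.eval_finset_sum] at this
    rw [Nat.sub_add_cancel hn] at this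
    rw [this]
    refine Finset.sum_congr rfl fun j hj => ?_
    rw [Finset.esymm_map_val]
    simp only [Polynomial.eval_mul, Polynomial.eval_pow, Polynomial.eval_neg,
      Polynomial.eval_one, Polynomial.eval_C, Polynomial.eval_X]
    ring
  -- the product M * J is the identity
  have hMJ : M * J = 1 := by
    ext i k
    rw [Matrix.mul_apply, Matrix.one_apply]
    have hterm : ∀ j : Fin n, M i j * J j k
        = ((-1 : ℝ) ^ (j : ℕ) * x i ^ (n - 1 - (j : ℕ)) *
            ∑ t ∈ (Finset.univ.erase k).powersetCard (j : ℕ), ∏ l ∈ t, x l) /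
          ∏ ℓ ∈ Finset.univ.erase i, (x i - x ℓ) := by
      intro j
      show ((-1 : ℝ) ^ (j : ℕ) * x i ^ (n - 1 - (j : ℕ)) / (derivative ω).eval (x i)) *
          MvPolynomial.eval x (MvPolynomial.pderiv k
            (MvPolynomial.esymm (Fin n) ℝ ((j : ℕ) + 1))) = _
      rw [eval_pderiv_esymm, hω, div_mul_eq_mul_div]
    rw [Finset.sum_congr rfl fun j _ => hterm j, ← Finset.sum_div]
    rw [Fin.sum_univ_eq_sum_range
      (fun j => (-1 : ℝ) ^ j * x i ^ (n - 1 - j) *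
        ∑ t ∈ (Finset.univ.erase k).powersetCard j, ∏ l ∈ t, x l)]
    rw [key i k]
    by_cases hik : i = k
    · subst hik
      rw [if_pos rfl, div_self (hD i)]
    · rw [if_neg hik]
      have : i ∈ Finset.univ.erase k := Finset.mem_erase.mpr ⟨hik, Finset.mem_univ i⟩
      rw [Finset.prod_eq_zero this (sub_self (x i)), zero_div]
  have hU : IsUnit M := (Matrix.isUnit_iff_isUnit_det M).mpr (Matrix.isUnit_det_of_right_inverse hMJ)
  exact ⟨hU, Matrix.inv_eq_right_inv hMJ⟩
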